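/- arXiv:1806.05070 — 2 statements merged into one kernel-verified Lean document; each statement's English description precedes it below -/
import Mathlib

section
/- Let T be the operator (Tf)(x) := x·f(α(x)) on L^p((0,1), m), where α(x) = {1/x} is the Gauss map and m is the Gauss measure with density 1/((1+x) log 2). Then for every s ∈ ℕ and p > 1 and f ∈ L^p: ∫₀¹ |T^s f(x)|^p dm(x) ≤ g^{(s−1)p} ∫₀¹ |f(x)|^p dm(x), where g = (√5 − 1)/2. -/
open Real MeasureTheory
open scoped ENNReal

/-- The transfer-type operator `(Tf)(x) = x · f({1/x})`. -/
noncomputable def gaussOp (f : ℝ → ℝ) : ℝ → ℝ := fun x => x * f (Int.fract (1 / x))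

/-- The Gauss measure `dm = dx/((1+x) log 2)` on `(0,1)`. -/
noncomputable def gaussMeasure : Measure ℝ :=
  (volume.restrict (Set.Ioo (0 : ℝ) 1)).withDensity
    (fun x => ENNReal.ofReal (1 / ((1 + x) * Real.log 2)))

namespace GaussAux

noncomputable def gmap (x : ℝ) : ℝ := Int.fract (1 / x)

noncomputable def gr : ℝ := (Real.sqrt 5 - 1) / 2

lemma sqrt5_sq : Real.sqrt 5 ^ 2 = 5 := Real.sq_sqrt (by norm_num)
lemma sqrt5_pos : 0 < Real.sqrt 5 := Real.sqrt_pos.2 (by norm_num)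
lemma sqrt5_gt_two : 2 < Real.sqrt 5 := by
  nlinarith [sqrt5_sq, sqrt5_pos]
lemma sqrt5_lt_three : Real.sqrt 5 < 3 := by
  nlinarith [sqrt5_sq, sqrt5_pos]

lemma gr_pos : 0 < gr := by unfold gr; linarith [sqrt5_gt_two]
lemma gr_lt_one : gr < 1 := by unfold gr; linarith [sqrt5_lt_three]
lemma gr_gt_half : 1/2 < gr := by unfold gr; linarith [sqrt5_gt_two]
lemma gr_sq : gr * gr = 1 - gr := by
  unfold gr; nlinarith [sqrt5_sq]

lemma gmap_mem (x : ℝ) : gmap x ∈ Set.Ico (0:ℝ) 1 :=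
  ⟨Int.fract_nonneg _, Int.fract_lt_one _⟩

/-- `∏_{k<s} α^k(x)` -/
noncomputable def prodG (s : ℕ) (x : ℝ) : ℝ := ∏ k ∈ Finset.range s, gmap^[k] x

lemma iter_nonneg (k : ℕ) (x : ℝ) (hx : 0 ≤ x) : 0 ≤ gmap^[k] x := by
  cases k with
  | zero => simpa
  | succ n => rw [Function.iterate_succ_apply']; exact Int.fract_nonneg _

lemma prodG_nonneg (s : ℕ) (x : ℝ) (hx : 0 ≤ x) : 0 ≤ prodG s x :=
  Finset.prod_nonneg fun k _ => iter_nonneg k x hx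

lemma prodG_succ (s : ℕ) (x : ℝ) : prodG (s+1) x = x * prodG s (gmap x) := by
  unfold prodG
  rw [Finset.prod_range_succ']
  simp only [Function.iterate_succ_apply, Function.iterate_zero_apply]
  ring

/-- key step inequality -/
lemma step_ineq (x : ℝ) (hx : x ∈ Set.Ico (0:ℝ) 1) :
    x * min (gmap x) gr ≤ gr * min x gr := by
  obtain ⟨hx0, hx1⟩ := hx
  rcases le_or_gt x gr with h | h
  · rw [min_eq_left h]
    calc x * min (gmap x) gr ≤ x * gr := by
          exact mul_le_mul_of_nonneg_left (min_le_right _ _) hx0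
      _ = gr * x := mul_comm _ _
  · rw [min_eq_right h.le]
    have hxpos : 0 < x := lt_trans gr_pos h
    have hfloor : ⌊(1:ℝ)/x⌋ = 1 := by
      rw [Int.floor_eq_iff]
      constructor
      · push_cast
        rw [le_div_iff₀ hxpos]; linarith
      · push_cast
        rw [div_lt_iff₀ hxpos]
        have : 1/2 < x := lt_trans gr_gt_half h
        linarith
    have hα : gmap x = 1/x - 1 := by
      unfold gmap
      rw [Int.fract, hfloor]; push_cast; ring
    have hxα : x * gmap x = 1 - x := by
      rw [hα]; field_simp
    calc x * min (gmap x) gr ≤ x * gmap x :=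
          mul_le_mul_of_nonneg_left (min_le_left _ _) hx0
      _ = 1 - x := hxα
      _ ≤ 1 - gr := by linarith
      _ = gr * gr := gr_sq.symm

lemma key_bound : ∀ s : ℕ, 1 ≤ s → ∀ x ∈ Set.Ico (0:ℝ) 1,
    gr * prodG s x ≤ gr ^ (s - 1) * min x gr := by
  intro s hs
  induction s, hs using Nat.le_induction with
  | base =>
    intro x hx
    have : prodG 1 x = x := by
      unfold prodG; simp
    rw [this]
    simp only [Nat.sub_self, pow_zero, one_mul]
    refine le_min ?_ ?_
    · calc gr * x ≤ 1 * x := by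
            exact mul_le_mul_of_nonneg_right gr_lt_one.le hx.1
        _ = x := one_mul x
    · calc gr * x ≤ gr * 1 := by
            exact mul_le_mul_of_nonneg_left hx.2.le gr_pos.le
        _ = gr := mul_one gr
  | succ s hs ih =>
    intro x hx
    have hα := gmap_mem x
    have h1 : gr * prodG (s+1) x = x * (gr * prodG s (gmap x)) := by
      rw [prodG_succ]; ring
    have h2 : x * (gr * prodG s (gmap x)) ≤ x * (gr ^ (s-1) * min (gmap x) gr) :=
      mul_le_mul_of_nonneg_left (ih (gmap x) hα) hx.1
    have h3 : x * (gr ^ (s-1) * min (gmap x) gr) = gr ^ (s-1) * (x * min (gmap x) gr) := by ring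
    have h4 : gr ^ (s-1) * (x * min (gmap x) gr) ≤ gr ^ (s-1) * (gr * min x gr) :=
      mul_le_mul_of_nonneg_left (step_ineq x hx) (pow_nonneg gr_pos.le _)
    have h5 : gr ^ (s-1) * (gr * min x gr) = gr ^ s * min x gr := by
      rw [← mul_assoc, ← pow_succ]
      congr 2
      omega
    have h6 : (s + 1) - 1 = s := by omega
    rw [h1, h6]
    calc x * (gr * prodG s (gmap x)) ≤ gr ^ (s-1) * (x * min (gmap x) gr) := by rw [← h3]; exact h2
      _ ≤ gr ^ (s-1) * (gr * min x gr) := h4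
      _ = gr ^ s * min x gr := h5

lemma prodG_le (s : ℕ) (hs : 1 ≤ s) (x : ℝ) (hx : x ∈ Set.Ico (0:ℝ) 1) :
    prodG s x ≤ gr ^ (s - 1) := by
  have h := key_bound s hs x hx
  have h2 : gr ^ (s-1) * min x gr ≤ gr ^ (s-1) * gr :=
    mul_le_mul_of_nonneg_left (min_le_right _ _) (pow_nonneg gr_pos.le _)
  have := h.trans h2
  rw [mul_comm (gr ^ (s-1)) gr] at this
  exact le_of_mul_le_mul_left this gr_pos

lemma iterate_eq (s : ℕ) (f : ℝ → ℝ) (x : ℝ) :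
    (gaussOp^[s] f) x = prodG s x * f (gmap^[s] x) := by
  induction s generalizing f with
  | zero => simp [prodG]
  | succ n ih =>
    rw [Function.iterate_succ_apply, ih]
    unfold prodG
    rw [Finset.prod_range_succ, Function.iterate_succ_apply']
    show (∏ k ∈ Finset.range n, gmap^[k] x) * (gmap^[n] x * f (gmap (gmap^[n] x))) = _
    ring


lemma measurable_gmap : Measurable gmap := measurable_fract.comp (measurable_const.div measurable_id)

/-- 1D version of the lintegral change of variables. -/
theorem lintegral_image_eq_lintegral_abs_deriv_mul {s : Set ℝ} {f f' : ℝ → ℝ}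
    (hs : MeasurableSet s) (hf' : ∀ x ∈ s, HasDerivWithinAt f (f' x) s x)
    (hf : Set.InjOn f s) (g : ℝ → ℝ≥0∞) :
    ∫⁻ x in f '' s, g x = ∫⁻ x in s, ENNReal.ofReal |f' x| * g (f x) := by
  simpa only [ContinuousLinearMap.det_toSpanSingleton] using
    lintegral_image_eq_lintegral_abs_det_fderiv_mul volume hs
      (fun x hx => (hf' x hx).hasFDerivWithinAt) hf g

noncomputable def dens (x : ℝ) : ℝ≥0∞ := ENNReal.ofReal (1 / ((1 + x) * Real.log 2))

lemma measurable_dens : Measurable dens := by unfold dens; fun_prop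

/-- On `(1/(n+2), 1/(n+1)]`, the Gauss map is `1/x - (n+1)`. -/
lemma gmap_eq_on (n : ℕ) (x : ℝ) (hx : x ∈ Set.Ioc (1/((n:ℝ)+2)) (1/((n:ℝ)+1))) :
    gmap x = 1/x - ((n:ℝ)+1) := by
  obtain ⟨h1, h2⟩ := hx
  have hn2 : (0:ℝ) < (n:ℝ)+2 := by positivity
  have hn1 : (0:ℝ) < (n:ℝ)+1 := by positivity
  have hxpos : 0 < x := lt_trans (by positivity) h1
  have hle : (n:ℝ)+1 ≤ 1/x := by
    rw [le_div_iff₀ hxpos]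
    calc ((n:ℝ)+1) * x ≤ ((n:ℝ)+1) * (1/((n:ℝ)+1)) := by
          exact mul_le_mul_of_nonneg_left h2 hn1.le
      _ = 1 := by field_simp
  have hlt : 1/x < (n:ℝ)+2 := by
    rw [div_lt_iff₀ hxpos]
    calc (1:ℝ) = ((n:ℝ)+2) * (1/((n:ℝ)+2)) := by field_simp
      _ < ((n:ℝ)+2) * x := by exact mul_lt_mul_of_pos_left h1 hn2
  have hfloor : ⌊1/x⌋ = (n:ℤ)+1 := by
    rw [Int.floor_eq_iff]
    constructor
    · push_cast; exact hle
    · push_cast; linarith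
  unfold gmap
  rw [Int.fract, hfloor]
  push_cast; ring

/-- `(0,1]` decomposes as the disjoint union of these intervals. -/
lemma iUnion_Ioc : (⋃ n : ℕ, Set.Ioc (1/((n:ℝ)+2)) (1/((n:ℝ)+1))) = Set.Ioc (0:ℝ) 1 := by
  ext x
  simp only [Set.mem_iUnion, Set.mem_Ioc]
  constructor
  · rintro ⟨n, h1, h2⟩
    have hn2 : (0:ℝ) < (n:ℝ)+2 := by positivity
    have hn1 : (0:ℝ) < (n:ℝ)+1 := by positivity
    refine ⟨lt_trans (by positivity) h1, h2.trans ?_⟩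
    rw [div_le_one hn1]; linarith [Nat.cast_nonneg (α := ℝ) n]
  · rintro ⟨h1, h2⟩
    have hx1 : 1 ≤ 1/x := by rw [le_div_iff₀ h1]; linarith
    set k := ⌊1/x⌋₊ with hk
    have hk1 : 1 ≤ k := Nat.le_floor (by exact_mod_cast hx1)
    have hcast : ((k - 1 : ℕ):ℝ) = (k:ℝ) - 1 := by
      push_cast [hk1]; ring
    have hkle : (k:ℝ) ≤ 1/x := Nat.floor_le (by positivity)
    have hklt : 1/x < (k:ℝ)+1 := Nat.lt_floor_add_one _
    have hkpos : (0:ℝ) < k := by exact_mod_cast hk1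
    refine ⟨k - 1, ?_, ?_⟩
    · rw [hcast]
      have : (k:ℝ) - 1 + 2 = (k:ℝ)+1 := by ring
      rw [this, div_lt_iff₀ (by positivity), ← div_lt_iff₀' ?side]
      · exact hklt
      case side => positivity
    · rw [hcast]
      have : (k:ℝ) - 1 + 1 = (k:ℝ) := by ring
      rw [this, le_div_iff₀ hkpos, ← le_div_iff₀' h1]
      exact hkle

lemma pairwise_disjoint :
    Pairwise (Function.onFun Disjoint fun n : ℕ => Set.Ioc (1/((n:ℝ)+2)) (1/((n:ℝ)+1))) := by
  intro m n hmn
  rw [Function.onFun, Set.Ioc_disjoint_Ioc]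
  rcases lt_or_gt_of_ne hmn with h | h
  · -- m < n : min ≤ 1/(n+1) ≤ 1/(m+2) ≤ max
    refine (min_le_right _ _).trans (le_trans ?_ (le_max_left _ _))
    apply one_div_le_one_div_of_le (by positivity)
    have : (m:ℝ) + 1 ≤ (n:ℝ) := by exact_mod_cast h
    linarith
  · refine (min_le_left _ _).trans (le_trans ?_ (le_max_right _ _))
    apply one_div_le_one_div_of_le (by positivity)
    have : (n:ℝ) + 1 ≤ (m:ℝ) := by exact_mod_cast h
    linarith

/-- image of `[0,1)` under `y ↦ 1/(y+n+1)` is `(1/(n+2), 1/(n+1)]`. -/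
lemma image_eq (n : ℕ) :
    (fun y : ℝ => 1/(y + ((n:ℝ)+1))) '' Set.Ico 0 1 = Set.Ioc (1/((n:ℝ)+2)) (1/((n:ℝ)+1)) := by
  ext x
  simp only [Set.mem_image, Set.mem_Ico, Set.mem_Ioc]
  constructor
  · rintro ⟨y, ⟨hy0, hy1⟩, rfl⟩
    constructor
    · apply one_div_lt_one_div_of_lt (by positivity); linarith
    · apply one_div_le_one_div_of_le (by positivity); linarith
  · rintro ⟨h1, h2⟩
    have hxpos : 0 < x := lt_trans (by positivity) h1
    refine ⟨1/x - ((n:ℝ)+1), ⟨?_, ?_⟩, ?_⟩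
    · have : (n:ℝ)+1 ≤ 1/x := by
        rw [le_div_iff₀ hxpos, ← le_div_iff₀' (by positivity)]; exact h2
      linarith
    · have : 1/x < (n:ℝ)+2 := by
        rw [div_lt_iff₀ hxpos, ← div_lt_iff₀' (by positivity)]; exact h1
      linarith
    · show 1/(1/x - ((n:ℝ)+1) + ((n:ℝ)+1)) = x
      rw [sub_add_cancel, one_div_one_div]

lemma injOn (n : ℕ) : Set.InjOn (fun y : ℝ => 1/(y + ((n:ℝ)+1))) (Set.Ico 0 1) := by
  intro a ha b hb hab
  simp only at hab
  have ha' : (0:ℝ) < a + ((n:ℝ)+1) := by have := ha.1; positivity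
  have hb' : (0:ℝ) < b + ((n:ℝ)+1) := by have := hb.1; positivity
  field_simp at hab
  linarith

lemma hasDeriv (n : ℕ) (y : ℝ) (hy : y ∈ Set.Ico (0:ℝ) 1) :
    HasDerivWithinAt (fun y : ℝ => 1/(y + ((n:ℝ)+1)))
      (-(1 / (y + ((n:ℝ)+1))^2)) (Set.Ico 0 1) y := by
  have hy' : y + ((n:ℝ)+1) ≠ 0 := by have := hy.1; positivity
  have h := ((hasDerivAt_id y).add_const ((n:ℝ)+1)).inv hy'
  simpa [one_div, div_eq_mul_inv, Pi.inv_def] using h.hasDerivWithinAt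

/-- The main change of variables on one piece. -/
lemma piece_eq (n : ℕ) (G : ℝ → ℝ≥0∞) :
    ∫⁻ x in Set.Ioc (1/((n:ℝ)+2)) (1/((n:ℝ)+1)), dens x * G (gmap x)
      = ∫⁻ y in Set.Ico (0:ℝ) 1,
          ENNReal.ofReal (1/((y+(n:ℝ)+1)*(y+(n:ℝ)+2)) / Real.log 2) * G y := by
  rw [← image_eq n,
    lintegral_image_eq_lintegral_abs_deriv_mul measurableSet_Ico (hasDeriv n) (injOn n)]
  apply setLIntegral_congr_fun measurableSet_Ico
  intro y hy
  beta_reduce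
  have hy0 := hy.1
  have ha : (0:ℝ) < y + ((n:ℝ)+1) := by positivity
  have himg : (1:ℝ)/(y + ((n:ℝ)+1)) ∈ Set.Ioc (1/((n:ℝ)+2)) (1/((n:ℝ)+1)) := by
    rw [← image_eq n]; exact Set.mem_image_of_mem _ hy
  rw [gmap_eq_on n _ himg]
  have hsimp : 1/(1/(y + ((n:ℝ)+1))) - ((n:ℝ)+1) = y := by
    rw [one_div_one_div]; ring
  rw [hsimp]
  unfold dens
  rw [abs_neg, abs_of_nonneg (by positivity), ← mul_assoc, ← ENNReal.ofReal_mul (by positivity)]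
  congr 2
  have hL : (0:ℝ) < Real.log 2 := Real.log_pos (by norm_num)
  have h2 : (0:ℝ) < 1 + 1/(y + ((n:ℝ)+1)) := by positivity
  field_simp
  ring

/-- One-step invariance of the Gauss measure. -/
lemma invariance (G : ℝ → ℝ≥0∞) (hG : Measurable G) :
    ∫⁻ x, G (gmap x) ∂gaussMeasure = ∫⁻ x, G x ∂gaussMeasure := by
  unfold gaussMeasure
  change ∫⁻ x, G (gmap x) ∂(volume.restrict (Set.Ioo 0 1)).withDensity dens
    = ∫⁻ x, G x ∂(volume.restrict (Set.Ioo 0 1)).withDensity dens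
  have hGg : Measurable (fun x => G (gmap x)) := hG.comp measurable_gmap
  rw [lintegral_withDensity_eq_lintegral_mul _ measurable_dens hGg,
      lintegral_withDensity_eq_lintegral_mul _ measurable_dens hG]
  show ∫⁻ x in Set.Ioo (0:ℝ) 1, dens x * G (gmap x) = ∫⁻ x in Set.Ioo (0:ℝ) 1, dens x * G x
  rw [setLIntegral_congr Ioo_ae_eq_Ioc, ← iUnion_Ioc,
    lintegral_iUnion (fun n => measurableSet_Ioc) pairwise_disjoint]
  have hpieces : ∀ n : ℕ, ∫⁻ x in Set.Ioc (1/((n:ℝ)+2)) (1/((n:ℝ)+1)), dens x * G (gmap x)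
      = ∫⁻ y in Set.Ico (0:ℝ) 1,
          ENNReal.ofReal (1/((y+(n:ℝ)+1)*(y+(n:ℝ)+2)) / Real.log 2) * G y := fun n => piece_eq n G
  rw [tsum_congr hpieces, ← lintegral_tsum (by
    intro n
    exact (((by fun_prop : Measurable fun y : ℝ => ENNReal.ofReal (1/((y+(n:ℝ)+1)*(y+(n:ℝ)+2)) / Real.log 2))).mul hG).aemeasurable)]
  rw [setLIntegral_congr (Ioo_ae_eq_Ico (μ := volume) (a := (0:ℝ)) (b := 1))]
  apply setLIntegral_congr_fun measurableSet_Ico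
  intro y hy
  beta_reduce
  have hy0 : (0:ℝ) ≤ y := hy.1
  have hL : (0:ℝ) < Real.log 2 := Real.log_pos (by norm_num)
  rw [ENNReal.tsum_mul_right]
  congr 1
  -- telescoping sum
  have hterm : ∀ n : ℕ, 1/((y+(n:ℝ)+1)*(y+(n:ℝ)+2)) = 1/(y+(n:ℝ)+1) - 1/(y+(n:ℝ)+2) := by
    intro n
    have h1 : (0:ℝ) < y+(n:ℝ)+1 := by positivity
    have h2 : (0:ℝ) < y+(n:ℝ)+2 := by positivity
    field_simp
    ring
  have hnonneg : ∀ n : ℕ, (0:ℝ) ≤ 1/((y+(n:ℝ)+1)*(y+(n:ℝ)+2)) := by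
    intro n; positivity
  have htend : Filter.Tendsto (fun N : ℕ => 1/(y+(N:ℝ)+1)) Filter.atTop (nhds 0) := by
    apply Filter.Tendsto.comp tendsto_inv_atTop_zero ?_ |>.congr (fun N => by rw [Function.comp_apply, one_div])
    apply Filter.tendsto_atTop_add_const_right
    apply Filter.tendsto_atTop_add_const_left
    exact tendsto_natCast_atTop_atTop
  have hsum : HasSum (fun n : ℕ => 1/((y+(n:ℝ)+1)*(y+(n:ℝ)+2))) (1/(y+1)) := by
    rw [hasSum_iff_tendsto_nat_of_nonneg hnonneg]
    have hps : ∀ N : ℕ, ∑ i ∈ Finset.range N, 1/((y+(i:ℝ)+1)*(y+(i:ℝ)+2))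
        = 1/(y+1) - 1/(y+(N:ℝ)+1) := by
      intro N
      calc ∑ i ∈ Finset.range N, 1/((y+(i:ℝ)+1)*(y+(i:ℝ)+2))
          = ∑ i ∈ Finset.range N, ((fun n : ℕ => 1/(y+(n:ℝ)+1)) i - (fun n : ℕ => 1/(y+(n:ℝ)+1)) (i+1)) := by
            apply Finset.sum_congr rfl
            intro i _
            rw [hterm i]
            simp only
            push_cast
            ring_nf
        _ = (fun n : ℕ => 1/(y+(n:ℝ)+1)) 0 - (fun n : ℕ => 1/(y+(n:ℝ)+1)) N :=
            Finset.sum_range_sub' _ N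
        _ = 1/(y+1) - 1/(y+(N:ℝ)+1) := by norm_num
    simp only [hps]
    have h0 : Filter.Tendsto (fun N : ℕ => 1/(y+1) - 1/(y+(N:ℝ)+1)) Filter.atTop
        (nhds (1/(y+1) - 0)) := Filter.Tendsto.const_sub _ htend
    simpa using h0
  have hsum2 : HasSum (fun n : ℕ => 1/((y+(n:ℝ)+1)*(y+(n:ℝ)+2)) / Real.log 2)
      ((1/(y+1)) / Real.log 2) := hsum.div_const _
  rw [← ENNReal.ofReal_tsum_of_nonneg (fun n => by positivity) hsum2.summable, hsum2.tsum_eq]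
  unfold dens
  congr 1
  rw [div_div, add_comm y 1]


lemma measurable_gmap_iter : ∀ n : ℕ, Measurable (gmap^[n]) := by
  intro n
  induction n with
  | zero => simpa using measurable_id
  | succ k ih =>
    rw [Function.iterate_succ]
    exact ih.comp measurable_gmap

lemma invariance_iter (s : ℕ) (G : ℝ → ℝ≥0∞) (hG : Measurable G) :
    ∫⁻ x, G (gmap^[s] x) ∂gaussMeasure = ∫⁻ x, G x ∂gaussMeasure := by
  induction s generalizing G with
  | zero => simp
  | succ n ih =>
    have h1 : Measurable (fun y => G (gmap y)) := hG.comp measurable_gmap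
    calc ∫⁻ x, G (gmap^[n+1] x) ∂gaussMeasure
        = ∫⁻ x, (fun y => G (gmap y)) (gmap^[n] x) ∂gaussMeasure := by
          simp_rw [Function.iterate_succ_apply' gmap n]
      _ = ∫⁻ x, (fun y => G (gmap y)) x ∂gaussMeasure := ih _ h1
      _ = ∫⁻ x, G x ∂gaussMeasure := invariance G hG

end GaussAux

/-- For `s ∈ ℕ`, `p > 1` and `f ∈ L^p`:
`∫₀¹ |T^s f|^p dm ≤ g^{(s-1)p} ∫₀¹ |f|^p dm` with `g = (√5-1)/2`. -/
theorem gaussOp_iterate_contraction (s : ℕ) (hs : 1 ≤ s) (p : ℝ) (hp : 1 < p)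
    (f : ℝ → ℝ) (hf : Measurable f)
    (hfLp : ∫⁻ x, ENNReal.ofReal (|f x| ^ p) ∂gaussMeasure ≠ ⊤) :
    ∫⁻ x, ENNReal.ofReal (|(gaussOp^[s] f) x| ^ p) ∂gaussMeasure
      ≤ ENNReal.ofReal (((Real.sqrt 5 - 1) / 2) ^ (((s : ℝ) - 1) * p)) *
        ∫⁻ x, ENNReal.ofReal (|f x| ^ p) ∂gaussMeasure := by
  set G : ℝ → ℝ≥0∞ := fun y => ENNReal.ofReal (|f y| ^ p) with hGdef
  set C : ℝ≥0∞ := ENNReal.ofReal (((Real.sqrt 5 - 1) / 2) ^ (((s : ℝ) - 1) * p)) with hCdef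
  have hGmeas : Measurable G := by
    apply Measurable.ennreal_ofReal
    fun_prop
  have hae : ∀ᵐ x ∂gaussMeasure, x ∈ Set.Ioo (0:ℝ) 1 := by
    have h1 : ∀ᵐ x ∂(volume.restrict (Set.Ioo (0:ℝ) 1)), x ∈ Set.Ioo (0:ℝ) 1 :=
      ae_restrict_mem measurableSet_Ioo
    exact h1.filter_mono (Measure.AbsolutelyContinuous.ae_le
      (withDensity_absolutelyContinuous _ _))
  have hp0 : (0:ℝ) ≤ p := le_of_lt (lt_trans one_pos hp)
  have hbound : ∀ᵐ x ∂gaussMeasure,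
      ENNReal.ofReal (|(gaussOp^[s] f) x| ^ p) ≤ C * G (GaussAux.gmap^[s] x) := by
    filter_upwards [hae] with x hx
    rw [GaussAux.iterate_eq]
    have hx' : x ∈ Set.Ico (0:ℝ) 1 := ⟨hx.1.le, hx.2⟩
    have hP0 : 0 ≤ GaussAux.prodG s x := GaussAux.prodG_nonneg s x hx.1.le
    have hPle : GaussAux.prodG s x ≤ GaussAux.gr ^ (s-1) := GaussAux.prodG_le s hs x hx'
    have habs : |GaussAux.prodG s x * f (GaussAux.gmap^[s] x)|
        = GaussAux.prodG s x * |f (GaussAux.gmap^[s] x)| := by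
      rw [abs_mul, abs_of_nonneg hP0]
    rw [habs, Real.mul_rpow hP0 (abs_nonneg _), ENNReal.ofReal_mul (by positivity)]
    refine mul_le_mul_of_nonneg_right ?_ (by positivity)
    apply ENNReal.ofReal_le_ofReal
    calc GaussAux.prodG s x ^ p ≤ (GaussAux.gr ^ (s-1)) ^ p :=
          Real.rpow_le_rpow hP0 hPle hp0
      _ = ((Real.sqrt 5 - 1) / 2) ^ (((s : ℝ) - 1) * p) := by
          rw [← Real.rpow_natCast GaussAux.gr (s-1), ← Real.rpow_mul GaussAux.gr_pos.le]
          rw [show ((s-1:ℕ):ℝ) = (s:ℝ)-1 by push_cast [Nat.cast_sub hs]; ring]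
          rfl
  have hHmeas : Measurable (fun x => G (GaussAux.gmap^[s] x)) :=
    hGmeas.comp (GaussAux.measurable_gmap_iter s)
  calc ∫⁻ x, ENNReal.ofReal (|(gaussOp^[s] f) x| ^ p) ∂gaussMeasure
      ≤ ∫⁻ x, C * G (GaussAux.gmap^[s] x) ∂gaussMeasure := lintegral_mono_ae hbound
    _ = C * ∫⁻ x, G (GaussAux.gmap^[s] x) ∂gaussMeasure := lintegral_const_mul C hHmeas
    _ = C * ∫⁻ x, G x ∂gaussMeasure := by
        rw [GaussAux.invariance_iter s G hGmeas]
end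

section
/- Vaughan's identity for the Möbius function: let w > 1 and for n ∈ ℕ define c₁(n) = ∑_{αβγ = n, α ≥ w, β ≥ w} μ(γ)c₄(α)c₄(β) with c₄(α) = −∑_{d₁d₂ = α, d₁ ≤ w} μ(d₁); c₂(n) = 2μ(n) if n ≤ w and 0 otherwise; c₃(n) = −∑_{αβγ = n, α ≤ w, β ≤ w} μ(α)μ(β). Then μ(n) = c₁(n) + c₂(n) + c₃(n) for every n ∈ ℕ. -/
open Finset ArithmeticFunction
open scoped ArithmeticFunction.zeta

/-- `c₄(α) = -∑_{d₁d₂ = α, d₁ ≤ w} μ(d₁)`. -/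
noncomputable def cFour (w : ℝ) (a : ℕ) : ℤ :=
  -∑ d ∈ a.divisorsAntidiagonal, if (d.1 : ℝ) ≤ w then moebius d.1 else 0

/-- `c₁(n) = ∑_{αβγ = n, α ≥ w, β ≥ w} μ(γ) c₄(α) c₄(β)`. -/
noncomputable def cOne (w : ℝ) (n : ℕ) : ℤ :=
  ∑ p ∈ n.divisorsAntidiagonal, ∑ q ∈ p.2.divisorsAntidiagonal,
    if w ≤ (p.1 : ℝ) ∧ w ≤ (q.1 : ℝ) then moebius q.2 * cFour w p.1 * cFour w q.1 else 0

/-- `c₂(n) = 2μ(n)` if `n ≤ w`, else `0`. -/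
noncomputable def cTwo (w : ℝ) (n : ℕ) : ℤ :=
  if (n : ℝ) ≤ w then 2 * moebius n else 0

/-- `c₃(n) = -∑_{αβγ = n, α ≤ w, β ≤ w} μ(α)μ(β)`. -/
noncomputable def cThree (w : ℝ) (n : ℕ) : ℤ :=
  -∑ p ∈ n.divisorsAntidiagonal, ∑ q ∈ p.2.divisorsAntidiagonal,
    if (p.1 : ℝ) ≤ w ∧ (q.1 : ℝ) ≤ w then moebius p.1 * moebius q.1 else 0

/-- The low part of the Möbius function: `μ(a)` if `a ≤ w`, else `0`. -/
noncomputable def ml (w : ℝ) : ArithmeticFunction ℤ :=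
  ⟨fun a => if (a : ℝ) ≤ w then moebius a else 0, by simp⟩

/-- The high part of the Möbius function. -/
noncomputable def mh (w : ℝ) : ArithmeticFunction ℤ := (moebius : ArithmeticFunction ℤ) - ml w

/-- `c₄` with the `≥ w` cutoff, as an arithmetic function. -/
noncomputable def Hf (w : ℝ) : ArithmeticFunction ℤ :=
  ⟨fun a => if w ≤ (a : ℝ) then cFour w a else 0, by simp [cFour]⟩

lemma Hf_eq (w : ℝ) (hw : 1 < w) : Hf w = mh w * ζ := by
  ext a
  rcases eq_or_ne a 0 with rfl | ha
  · simp [ArithmeticFunction.map_zero]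
  have hz : (mh w * (ζ : ArithmeticFunction ℤ)) a
      = ∑ d ∈ a.divisorsAntidiagonal, (if (d.1 : ℝ) ≤ w then 0 else moebius d.1) := by
    rw [mul_apply]
    refine Finset.sum_congr rfl fun d hd => ?_
    have h2 : d.2 ≠ 0 := by
      rcases Nat.mem_divisorsAntidiagonal.mp hd with ⟨h, h0⟩
      rintro h2; rw [h2] at h; simp at h; omega
    have : ((ζ : ArithmeticFunction ℤ)) d.2 = 1 := by simp [h2]
    rw [this, mul_one]
    show (moebius d.1 - (if (d.1 : ℝ) ≤ w then moebius d.1 else 0)) = _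
    split_ifs <;> ring
  rw [hz]
  show (if w ≤ (a : ℝ) then cFour w a else 0) = _
  by_cases h : w ≤ (a : ℝ)
  · rw [if_pos h]
    have hmz : ∑ d ∈ a.divisorsAntidiagonal, (moebius d.1 : ℤ) = 0 := by
      have := congrArg (fun f : ArithmeticFunction ℤ => f a) moebius_mul_coe_zeta
      simp only [mul_apply, one_apply] at this
      have ha1 : a ≠ 1 := by
        rintro rfl; simp at h; linarith
      rw [if_neg ha1] at this
      rw [← this]
      refine Finset.sum_congr rfl fun d hd => ?_
      have h2 : d.2 ≠ 0 := by
        rcases Nat.mem_divisorsAntidiagonal.mp hd with ⟨hh, h0⟩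
        rintro h2; rw [h2] at hh; simp at hh; omega
      simp [h2]
    have hsplit : ∑ d ∈ a.divisorsAntidiagonal, (moebius d.1 : ℤ)
        = (∑ d ∈ a.divisorsAntidiagonal, if (d.1 : ℝ) ≤ w then (moebius d.1 : ℤ) else 0)
          + ∑ d ∈ a.divisorsAntidiagonal, if (d.1 : ℝ) ≤ w then 0 else (moebius d.1 : ℤ) := by
      rw [← Finset.sum_add_distrib]
      refine Finset.sum_congr rfl fun d _ => ?_
      split_ifs <;> ring
    rw [hsplit] at hmz
    unfold cFour
    linarith
  · rw [if_neg h]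
    symm
    refine Finset.sum_eq_zero fun d hd => ?_
    rcases Nat.mem_divisorsAntidiagonal.mp hd with ⟨hh, h0⟩
    have hd1 : d.1 ≤ a := Nat.le_of_dvd (Nat.pos_of_ne_zero h0) ⟨d.2, hh.symm⟩
    have : (d.1 : ℝ) ≤ w := le_trans (Nat.cast_le.mpr hd1) (le_of_not_ge h)
    rw [if_pos this]

lemma cOne_eq (w : ℝ) (n : ℕ) :
    cOne w n = (Hf w * (Hf w * moebius)) n := by
  rw [mul_apply]
  unfold cOne
  refine Finset.sum_congr rfl fun p hp => ?_
  rw [mul_apply, Finset.mul_sum]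
  refine Finset.sum_congr rfl fun q hq => ?_
  show _ = (if w ≤ (p.1:ℝ) then cFour w p.1 else 0) *
    ((if w ≤ (q.1:ℝ) then cFour w q.1 else 0) * moebius q.2)
  split_ifs with h1 h2 h3 <;> simp_all <;> ring

lemma cThree_eq (w : ℝ) (n : ℕ) (hn : n ≠ 0) :
    cThree w n = -((ml w * (ml w * ζ)) n) := by
  rw [mul_apply]
  unfold cThree
  congr 1
  refine Finset.sum_congr rfl fun p hp => ?_
  rw [mul_apply, Finset.mul_sum]
  have hp2 : p.2 ≠ 0 := by
    rcases Nat.mem_divisorsAntidiagonal.mp hp with ⟨hh, h0⟩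
    rintro h2; rw [h2] at hh; simp at hh; omega
  refine Finset.sum_congr rfl fun q hq => ?_
  have hq2 : q.2 ≠ 0 := by
    rcases Nat.mem_divisorsAntidiagonal.mp hq with ⟨hh, h0⟩
    rintro h2; rw [h2] at hh; simp at hh; omega
  have : ((ζ : ArithmeticFunction ℤ)) q.2 = 1 := by simp [hq2]
  rw [this, mul_one]
  show _ = (if (p.1:ℝ) ≤ w then (moebius p.1 : ℤ) else 0) *
    (if (q.1:ℝ) ≤ w then (moebius q.1 : ℤ) else 0)
  split_ifs with h1 h2 h3 <;> simp_all

lemma key (w : ℝ) (hw : 1 < w) :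
    Hf w * (Hf w * moebius) + (ml w + ml w)
      = moebius + ml w * (ml w * ζ) := by
  rw [Hf_eq w hw]
  unfold mh
  have hz : (moebius * ζ : ArithmeticFunction ℤ) = 1 := moebius_mul_coe_zeta
  linear_combination ((((moebius : ArithmeticFunction ℤ) - ml w)^2 * ζ
    + moebius - 2 * ml w)) * hz

/-- Vaughan's identity for the Möbius function:
`μ(n) = c₁(n) + c₂(n) + c₃(n)` for all `n ≥ 1` and `w > 1`. -/
theorem vaughan_identity (w : ℝ) (hw : 1 < w) (n : ℕ) (hn : 1 ≤ n) :
    moebius n = cOne w n + cTwo w n + cThree w n := by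
  have hn0 : n ≠ 0 := by omega
  have h1 := congrArg (fun f : ArithmeticFunction ℤ => f n) (key w hw)
  simp only [ArithmeticFunction.add_apply] at h1
  have hml : ml w n = if (n:ℝ) ≤ w then (moebius n : ℤ) else 0 := rfl
  have h2 : cTwo w n = ml w n + ml w n := by
    unfold cTwo; rw [hml]; split_ifs <;> ring
  rw [cOne_eq w n, cThree_eq w n hn0, h2]
  linarith
end
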